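/- In the horizontal strip S: if I ⊂ ∂S contains a neighborhood of the left end, i.e. I ⊇ {x ∈ ℝ : x < a} ∪ {x + i : x < b} for some a, b ∈ ℝ, and J ⊂ ∂S contains a neighborhood of the right end, i.e. J ⊇ {x ∈ ℝ : x > c} ∪ {x + i : x > d} for some c, d ∈ ℝ, then mod Γᵋ_{I,J} → ∞ as ε → 0⁺. -/

import Mathlib

open MeasureTheory Set

noncomputable section

/-- A continuous, piecewise continuously differentiable curve parametrized by `[0,1]`. -/
structure PCurve where
  toFun : ℝ → ℂ
  continuousOn : ContinuousOn toFun (Set.Icc 0 1)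
  exceptional : Finset ℝ
  differentiableAt : ∀ t ∈ Set.Icc (0:ℝ) 1 \ (exceptional : Set ℝ), DifferentiableAt ℝ toFun t
  derivContinuousOn : ContinuousOn (deriv toFun) (Set.Icc (0:ℝ) 1 \ (exceptional : Set ℝ))

/-- The line integral `∫_γ ρ |dz|` of a nonnegative Borel function along a curve. -/
def curveLIntegral (ρ : ℂ → ENNReal) (γ : PCurve) : ENNReal :=
  ∫⁻ t in Set.Ioo (0:ℝ) 1, ρ (γ.toFun t) * ENNReal.ofReal ‖deriv γ.toFun t‖

/-- `ρ` is admissible for the curve family `Γ`. -/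
def IsAdmissible (ρ : ℂ → ENNReal) (Γ : Set PCurve) : Prop :=
  Measurable ρ ∧ ∀ γ ∈ Γ, 1 ≤ curveLIntegral ρ γ

/-- The conformal modulus of a family of curves. -/
def modulus (Γ : Set PCurve) : ENNReal :=
  ⨅ (ρ : ℂ → ENNReal) (_ : IsAdmissible ρ Γ), ∫⁻ z : ℂ, ρ z ^ 2

/-- The family `(E, F; Ω)` of curves with interior in `Ω`, one endpoint in `E` and
the other endpoint in `F`. -/
def connecting (E F Ω : Set ℂ) : Set PCurve :=
  {γ | (∀ t ∈ Set.Ioo (0:ℝ) 1, γ.toFun t ∈ Ω) ∧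
    ((γ.toFun 0 ∈ E ∧ γ.toFun 1 ∈ F) ∨ (γ.toFun 0 ∈ F ∧ γ.toFun 1 ∈ E))}

/-- A continuum: a compact connected set with more than one point. -/
def IsContinuum (E : Set ℂ) : Prop :=
  IsCompact E ∧ IsConnected E ∧ E.Nontrivial

/-- The distance between two sets. -/
def setDist (E F : Set ℂ) : ℝ :=
  sInf (Set.image2 dist E F)

/-- The relative distance `Δ(E,F) = dist(E,F) / min(diam E, diam F)`. -/
def relDist (E F : Set ℂ) : ℝ :=
  setDist E F / min (Metric.diam E) (Metric.diam F)

/-- The horizontal strip `S = {z : 0 < Im z < 1}`. -/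
def stripS : Set ℂ := {z | 0 < z.im ∧ z.im < 1}

/-- The boundary `∂S = ℝ ∪ (ℝ + i)` of the strip. -/
def stripBdry : Set ℂ := {z | z.im = 0 ∨ z.im = 1}

/-- The horizontal shrinking map `H_ε(x + iy) = εx + iy`. -/
def Heps (ε : ℝ) (z : ℂ) : ℂ := ⟨ε * z.re, z.im⟩

/-- The left-end piece `{x ∈ ℝ : x < a} ∪ {x + i : x < b}` of `∂S`. -/
def leftEnd (a b : ℝ) : Set ℂ :=
  {z : ℂ | z.im = 0 ∧ z.re < a} ∪ {z : ℂ | z.im = 1 ∧ z.re < b}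

/-- The right-end piece `{x ∈ ℝ : a < x} ∪ {x + i : b < x}` of `∂S`. -/
def rightEnd (a b : ℝ) : Set ℂ :=
  {z : ℂ | z.im = 0 ∧ a < z.re} ∪ {z : ℂ | z.im = 1 ∧ b < z.re}

/-- `Γᵋ_{I,J} = (H_ε(I), H_ε(J); S)`. -/
def stripFam (ε : ℝ) (I J : Set ℂ) : Set PCurve :=
  connecting (Heps ε '' I) (Heps ε '' J) stripS


open Real in
/-- The semicircle `t ↦ r e^{iπ t}`. -/
def semic (r : ℝ) : ℝ → ℂ := fun t => (r : ℂ) * Complex.exp ((π : ℂ) * t * Complex.I)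

open Real in
lemma semic_hasDerivAt (r : ℝ) (t : ℝ) :
    HasDerivAt (semic r) ((r : ℂ) * (Complex.exp ((π : ℂ) * t * Complex.I) * ((π : ℂ) * Complex.I))) t := by
  have h0 : HasDerivAt (fun t : ℝ => ((π * t : ℝ) : ℂ)) (π : ℂ) t := by
    simpa using ((hasDerivAt_id t).const_mul π).ofReal_comp
  have h1 := (h0.mul_const Complex.I).cexp.const_mul (r : ℂ)
  simp only [Complex.ofReal_mul] at h1
  exact h1

open Real in
lemma semic_deriv (r : ℝ) (t : ℝ) :
    deriv (semic r) t = (r : ℂ) * (Complex.exp ((π : ℂ) * t * Complex.I) * ((π : ℂ) * Complex.I)) :=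
  (semic_hasDerivAt r t).deriv

open Real in
lemma semic_deriv_norm (r : ℝ) (hr : 0 ≤ r) (t : ℝ) : ‖deriv (semic r) t‖ = π * r := by
  rw [semic_deriv]
  have h : ((π : ℂ) * t * Complex.I).re = 0 := by simp
  simp [Complex.norm_exp, h, abs_of_nonneg hr, abs_of_nonneg Real.pi_pos.le]
  ring

open Real in
lemma semic_im (r t : ℝ) : (semic r t).im = r * Real.sin (π * t) := by
  simp [semic, Complex.ext_iff, Complex.exp_re, Complex.exp_im]

open Real in
lemma semic_zero (r : ℝ) : semic r 0 = (r : ℂ) := by simp [semic]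

open Real in
lemma semic_one (r : ℝ) : semic r 1 = (-r : ℝ) := by
  simp [semic, Complex.exp_pi_mul_I]

lemma semic_continuous (r : ℝ) : Continuous (semic r) := by
  unfold semic; fun_prop

/-- The semicircle as a `PCurve`. -/
def semiPC (r : ℝ) : PCurve where
  toFun := semic r
  continuousOn := (semic_continuous r).continuousOn
  exceptional := ∅
  differentiableAt := fun t _ => (semic_hasDerivAt r t).differentiableAt
  derivContinuousOn := by
    have h : deriv (semic r) = fun t : ℝ =>
        (r : ℂ) * (Complex.exp ((Real.pi : ℂ) * t * Complex.I) * ((Real.pi : ℂ) * Complex.I)) :=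
      funext fun t => semic_deriv r t
    rw [h]
    apply Continuous.continuousOn
    fun_prop

open Real in
lemma semiPC_mem (I J : Set ℂ) (a b c d : ℝ) (hI : leftEnd a b ⊆ I) (hJ : rightEnd c d ⊆ J)
    {ε r : ℝ} (hε : 0 < ε) (hK : ε * (max (max |a| |c|) 1) < r) (hr1 : r < 1) :
    semiPC r ∈ stripFam ε I J := by
  set K := max (max |a| |c|) 1 with hKdef
  have hK1 : (1:ℝ) ≤ K := le_max_right _ _
  have hrpos : 0 < r := lt_trans (by positivity) hK
  have hrK : K < r / ε := (lt_div_iff₀ hε).2 (by linarith [hK])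
  constructor
  · intro t ht
    show 0 < (semic r t).im ∧ (semic r t).im < 1
    obtain ⟨ht0, ht1⟩ := ht
    have hpt : 0 < π * t := mul_pos Real.pi_pos ht0
    constructor
    · rw [semic_im]
      have : 0 < Real.sin (π * t) :=
        Real.sin_pos_of_pos_of_lt_pi hpt (by nlinarith [Real.pi_pos])
      positivity
    · rw [semic_im]
      have h1 : Real.sin (π * t) ≤ 1 := Real.sin_le_one _
      nlinarith [Real.sin_pos_of_pos_of_lt_pi hpt
        (by nlinarith [Real.pi_pos] : π * t < π)]
  · right
    constructor
    · refine ⟨⟨r / ε, 0⟩, hJ (Or.inl ⟨rfl, ?_⟩), ?_⟩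
      · calc c ≤ |c| := le_abs_self c
          _ ≤ K := le_trans (le_max_right _ _) (le_max_left _ _)
          _ < r / ε := hrK
      · show Heps ε ⟨r / ε, 0⟩ = semic r 0
        rw [semic_zero]
        simp [Heps, Complex.ext_iff, mul_div_cancel₀ _ hε.ne']
    · refine ⟨⟨-(r / ε), 0⟩, hI (Or.inl ⟨rfl, ?_⟩), ?_⟩
      · have : |a| ≤ K := le_trans (le_max_left _ _) (le_max_left _ _)
        have := neg_abs_le a
        linarith
      · show Heps ε ⟨-(r / ε), 0⟩ = semic r 1
        rw [semic_one]
        simp [Heps, Complex.ext_iff, mul_div_cancel₀ _ hε.ne']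

section Aux
open Real

/-- The planar polar-type map `z ↦ z.re · e^{iπ z.im}`. -/
def Phi (z : ℂ) : ℂ := semic z.re z.im

/-- Its derivative at `z`. -/
def PhiD (z : ℂ) : ℂ →L[ℝ] ℂ :=
  ((z.re : ℂ) * Complex.exp ((π : ℂ) * z.im * Complex.I)) •
      (((π : ℂ) * Complex.I) • (Complex.ofRealCLM.comp Complex.imCLM)) +
    Complex.exp ((π : ℂ) * z.im * Complex.I) • (Complex.ofRealCLM.comp Complex.reCLM)

lemma hasFDerivAt_Phi (z : ℂ) : HasFDerivAt Phi (PhiD z) z := by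
  have hu : HasFDerivAt (fun z : ℂ => ((z.re : ℝ) : ℂ))
      (Complex.ofRealCLM.comp Complex.reCLM) z :=
    (Complex.ofRealCLM.comp Complex.reCLM).hasFDerivAt
  have hc : HasFDerivAt (fun z : ℂ => (π : ℂ) * z.im * Complex.I)
      (((π : ℂ) * Complex.I) • (Complex.ofRealCLM.comp Complex.imCLM)) z := by
    have h0 : HasFDerivAt (fun z : ℂ => ((z.im : ℝ) : ℂ))
        (Complex.ofRealCLM.comp Complex.imCLM) z :=
      (Complex.ofRealCLM.comp Complex.imCLM).hasFDerivAt
    have h1 := (h0.const_mul ((π : ℂ))).mul_const Complex.I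
    refine h1.congr_fderiv ?_
    ext w
    simp [mul_comm, mul_assoc, mul_left_comm]
  have hv := hc.cexp
  have h := hu.mul hv
  refine h.congr_fderiv ?_
  unfold PhiD
  module

lemma det_eq_aux (f : ℂ →L[ℝ] ℂ) :
    LinearMap.det (f : ℂ →ₗ[ℝ] ℂ) = (f 1).re * (f Complex.I).im - (f Complex.I).re * (f 1).im := by
  rw [← LinearMap.det_toMatrix Complex.basisOneI, Matrix.det_fin_two]
  simp [LinearMap.toMatrix_apply]

lemma PhiD_det (z : ℂ) : (PhiD z).det = π * z.re := by
  rw [ContinuousLinearMap.det, det_eq_aux]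
  have h1 : (PhiD z) 1 = Complex.exp ((π : ℂ) * z.im * Complex.I) := by
    simp [PhiD]
  have h2 : (PhiD z) Complex.I =
      ((z.re : ℂ) * Complex.exp ((π : ℂ) * z.im * Complex.I)) * ((π : ℂ) * Complex.I) := by
    simp [PhiD]
  rw [h1, h2]
  set e := Complex.exp ((π : ℂ) * z.im * Complex.I) with he
  have habs : e.re * e.re + e.im * e.im = 1 := by
    have h0 : ‖e‖ = 1 := by
      rw [he, Complex.norm_exp]; simp
    have h1 : Complex.normSq e = 1 := by
      rw [Complex.normSq_eq_norm_sq, h0]; norm_num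
    rw [Complex.normSq_apply] at h1
    exact h1

  simp only [Complex.mul_re, Complex.mul_im, Complex.I_re, Complex.I_im, Complex.ofReal_re,
    Complex.ofReal_im]
  linear_combination (π * z.re) * habs

lemma injOn_Phi {s0 : ℝ} (hs0 : 0 < s0) :
    InjOn Phi {z : ℂ | z.re ∈ Ioo s0 1 ∧ z.im ∈ Ioo 0 1} := by
  rintro z ⟨hz1, hz2⟩ w ⟨hw1, hw2⟩ h
  have hzre : 0 < z.re := lt_trans hs0 hz1.1
  have hwre : 0 < w.re := lt_trans hs0 hw1.1
  have habs : ‖Phi z‖ = z.re := by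
    simp [Phi, semic, Complex.norm_exp, abs_of_pos hzre]
  have habsw : ‖Phi w‖ = w.re := by
    simp [Phi, semic, Complex.norm_exp, abs_of_pos hwre]
  have hre : z.re = w.re := by rw [← habs, ← habsw, h]
  have hexp : Complex.exp ((π : ℂ) * z.im * Complex.I) =
      Complex.exp ((π : ℂ) * w.im * Complex.I) := by
    have := h
    simp only [Phi, semic, hre] at this
    exact mul_left_cancel₀ (by exact_mod_cast hwre.ne') this
  have hcos : Real.cos (π * z.im) = Real.cos (π * w.im) := by
    have h1 := congrArg Complex.re hexp
    have e1 : ((π : ℂ) * z.im * Complex.I) = ((π * z.im : ℝ) : ℂ) * Complex.I := by push_cast; ring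
    have e2 : ((π : ℂ) * w.im * Complex.I) = ((π * w.im : ℝ) : ℂ) * Complex.I := by push_cast; ring
    rwa [e1, e2, Complex.exp_ofReal_mul_I_re, Complex.exp_ofReal_mul_I_re] at h1
  have him : z.im = w.im := by
    have := Real.injOn_cos ⟨by nlinarith [Real.pi_pos, hz2.1], by nlinarith [Real.pi_pos, hz2.2]⟩
      ⟨by nlinarith [Real.pi_pos, hw2.1], by nlinarith [Real.pi_pos, hw2.2]⟩ hcos
    have hπ := Real.pi_pos
    exact mul_left_cancel₀ hπ.ne' this
  exact Complex.ext hre him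

lemma log_lintegral {s0 : ℝ} (h0 : 0 < s0) (h1 : s0 < 1) :
    ENNReal.ofReal (Real.log (1 / s0) / π) ≤ ∫⁻ r in Ioo s0 1, ENNReal.ofReal (1 / (π * r)) := by
  have hcont : ContinuousOn (fun r : ℝ => 1 / (π * r)) (Icc s0 1) := by
    apply ContinuousOn.div continuousOn_const (by fun_prop)
    intro x hx
    have hx0 : 0 < x := lt_of_lt_of_le h0 hx.1
    positivity
  have hint : IntegrableOn (fun r : ℝ => 1 / (π * r)) (Ioo s0 1) :=
    (hcont.integrableOn_compact isCompact_Icc).mono_set Ioo_subset_Icc_self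
  have hnn : 0 ≤ᵐ[volume.restrict (Ioo s0 1)] fun r : ℝ => 1 / (π * r) := by
    filter_upwards [ae_restrict_mem measurableSet_Ioo] with r hr
    have hr0 : 0 < r := lt_trans h0 hr.1
    positivity
  rw [← ofReal_integral_eq_lintegral_ofReal hint hnn]
  apply ENNReal.ofReal_le_ofReal
  have heq : ∫ r in Ioo s0 1, 1 / (π * r) = ∫ r in s0..1, 1 / (π * r) := by
    rw [intervalIntegral.integral_of_le h1.le, ← integral_Ioc_eq_integral_Ioo]
  rw [heq]
  have : ∀ r : ℝ, 1 / (π * r) = (1 / π) * (1 / r) := fun r => by ring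
  simp_rw [this]
  rw [intervalIntegral.integral_const_mul, integral_one_div]
  · apply le_of_eq
    rw [Real.log_div one_ne_zero h0.ne']
    ring
  · rw [Set.uIcc_of_le h1.le]
    rintro ⟨h, -⟩
    linarith

lemma sq_lintegral_le_of_Ioo01 {f : ℝ → ENNReal} (hf : Measurable f) :
    (∫⁻ t in Ioo (0:ℝ) 1, f t) ^ 2 ≤ ∫⁻ t in Ioo (0:ℝ) 1, f t ^ 2 := by
  set μ := volume.restrict (Ioo (0:ℝ) 1)
  have hpq : Real.HolderConjugate 2 2 := Real.HolderConjugate.two_two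
  have h := ENNReal.lintegral_mul_le_Lp_mul_Lq μ hpq hf.aemeasurable
    (aemeasurable_const (b := (1:ENNReal)))
  simp only [Pi.mul_apply, mul_one, ENNReal.one_rpow, lintegral_const] at h
  have hμ : μ univ = 1 := by simp [μ]
  rw [hμ, mul_one, ENNReal.one_rpow, mul_one] at h
  calc (∫⁻ t, f t ∂μ) ^ 2 ≤ ((∫⁻ t, f t ^ (2:ℝ) ∂μ) ^ (1/(2:ℝ))) ^ 2 := pow_le_pow_left' h 2
    _ = ∫⁻ t, f t ^ (2:ℝ) ∂μ := by
        rw [← ENNReal.rpow_natCast _ 2, ← ENNReal.rpow_mul]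
        norm_num
    _ = ∫⁻ t, f t ^ 2 ∂μ := by
        refine lintegral_congr fun t => ?_
        rw [← ENNReal.rpow_natCast (f t) 2]; norm_num

lemma key_bound {ρ : ℂ → ENNReal} (hmeas : Measurable ρ) {s0 : ℝ} (h0 : 0 < s0) (h1 : s0 < 1)
    (hadm : ∀ r ∈ Ioo s0 1,
      ENNReal.ofReal (1 / (π * r)) ≤ ∫⁻ t in Ioo (0:ℝ) 1, ρ (semic r t)) :
    ENNReal.ofReal (Real.log (1 / s0) / π) ≤ ∫⁻ z : ℂ, ρ z ^ 2 := by
  have hcont : Continuous fun p : ℝ × ℝ => semic p.1 p.2 := by unfold semic; fun_prop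
  set s : Set ℂ := {z : ℂ | z.re ∈ Ioo s0 1 ∧ z.im ∈ Ioo 0 1} with hs_def
  have hs_pre : s = Complex.measurableEquivRealProd ⁻¹' (Ioo s0 1 ×ˢ Ioo (0:ℝ) 1) := by
    ext z
    simp [Complex.measurableEquivRealProd, Complex.equivRealProd, s]
  have hs : MeasurableSet s := by
    rw [hs_pre]
    exact Complex.measurableEquivRealProd.measurable (measurableSet_Ioo.prod measurableSet_Ioo)
  have hder : ∀ z ∈ s, HasFDerivWithinAt Phi (PhiD z) s z :=
    fun z _ => (hasFDerivAt_Phi z).hasFDerivWithinAt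
  calc ENNReal.ofReal (Real.log (1 / s0) / π)
      ≤ ∫⁻ r in Ioo s0 1, ENNReal.ofReal (1 / (π * r)) := log_lintegral h0 h1
    _ ≤ ∫⁻ r in Ioo s0 1, ∫⁻ t in Ioo (0:ℝ) 1,
          ENNReal.ofReal |π * r| * ρ (semic r t) ^ 2 := by
        refine setLIntegral_mono' measurableSet_Ioo fun r hr => ?_
        have hrpos : 0 < r := lt_trans h0 hr.1
        have hπr : 0 < π * r := by positivity
        have hm : Measurable fun t : ℝ => ρ (semic r t) ^ 2 :=
          ((hmeas.comp (by unfold semic; fun_prop : Continuous (semic r)).measurable).pow_const 2)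
        rw [lintegral_const_mul _ hm]
        have hF : (ENNReal.ofReal (1 / (π * r))) ^ 2
            ≤ ∫⁻ t in Ioo (0:ℝ) 1, ρ (semic r t) ^ 2 := by
          refine le_trans ?_ (sq_lintegral_le_of_Ioo01
            (hmeas.comp (by unfold semic; fun_prop : Continuous (semic r)).measurable))
          exact pow_le_pow_left' (hadm r hr) 2
        calc ENNReal.ofReal (1 / (π * r))
            = ENNReal.ofReal |π * r| * ENNReal.ofReal (1 / (π * r)) ^ 2 := by
              rw [abs_of_pos hπr, ← ENNReal.ofReal_pow (by positivity), ← ENNReal.ofReal_mul hπr.le]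
              congr 1
              field_simp
          _ ≤ ENNReal.ofReal |π * r| * ∫⁻ t in Ioo (0:ℝ) 1, ρ (semic r t) ^ 2 :=
              mul_le_mul_right hF _
    _ = ∫⁻ p in Ioo s0 1 ×ˢ Ioo (0:ℝ) 1,
          ENNReal.ofReal |π * p.1| * ρ (semic p.1 p.2) ^ 2 := by
        rw [Measure.volume_eq_prod, ← Measure.prod_restrict,
          lintegral_prod _ (by fun_prop : Measurable fun p : ℝ × ℝ =>
            ENNReal.ofReal |π * p.1| * ρ (semic p.1 p.2) ^ 2).aemeasurable]
    _ = ∫⁻ z in s, ENNReal.ofReal |(PhiD z).det| * ρ (Phi z) ^ 2 := by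
        rw [hs_pre,
          ← Complex.volume_preserving_equiv_real_prod.setLIntegral_comp_preimage_emb
            Complex.measurableEquivRealProd.measurableEmbedding
            (fun p => ENNReal.ofReal |π * p.1| * ρ (semic p.1 p.2) ^ 2)]
        refine lintegral_congr fun z => ?_
        rw [PhiD_det]
        rfl
    _ = ∫⁻ z in Phi '' s, ρ z ^ 2 := by
        rw [lintegral_image_eq_lintegral_abs_det_fderiv_mul volume hs hder
          (hs_def ▸ injOn_Phi h0) (fun z => ρ z ^ 2)]
    _ ≤ ∫⁻ z : ℂ, ρ z ^ 2 := setLIntegral_le_lintegral _ _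

end Aux

section Aux2
open Real

lemma adm_bound {ρ : ℂ → ENNReal} (hmeas : Measurable ρ) {r : ℝ} (hr : 0 < r)
    (h1 : 1 ≤ curveLIntegral ρ (semiPC r)) :
    ENNReal.ofReal (1 / (π * r)) ≤ ∫⁻ t in Ioo (0:ℝ) 1, ρ (semic r t) := by
  have hπr : 0 < π * r := by positivity
  have heq : curveLIntegral ρ (semiPC r)
      = (∫⁻ t in Ioo (0:ℝ) 1, ρ (semic r t)) * ENNReal.ofReal (π * r) := by
    unfold curveLIntegral
    have hm : Measurable fun t : ℝ => ρ (semic r t) :=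
      hmeas.comp (semic_continuous r).measurable
    rw [← lintegral_mul_const _ hm]
    refine setLIntegral_congr_fun measurableSet_Ioo (fun t ht => ?_)
    show ρ (semic r t) * ENNReal.ofReal ‖deriv (semic r) t‖ = _
    rw [semic_deriv_norm r hr.le]
  rw [heq] at h1
  set c := ENNReal.ofReal (π * r) with hc
  set S := ∫⁻ t in Ioo (0:ℝ) 1, ρ (semic r t) with hS
  have hc0 : c ≠ 0 := by
    simp only [hc, ne_eq, ENNReal.ofReal_eq_zero, not_le]
    exact hπr
  have hct : c ≠ ⊤ := ENNReal.ofReal_ne_top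
  have hfin : c⁻¹ ≤ S := by
    calc c⁻¹ = 1 * c⁻¹ := (one_mul _).symm
      _ ≤ (S * c) * c⁻¹ := mul_le_mul_left h1 _
      _ = S * (c * c⁻¹) := mul_assoc _ _ _
      _ = S := by rw [ENNReal.mul_inv_cancel hc0 hct, mul_one]
  rwa [one_div, ENNReal.ofReal_inv_of_pos hπr]

end Aux2

/-- If `I` contains a neighborhood of the left end of `∂S` and `J` contains a neighborhood
of the right end, then `mod Γᵋ_{I,J} → ∞` as `ε → 0⁺`. -/
theorem strip_modulus_tendsto_top (I J : Set ℂ) (hIbd : I ⊆ stripBdry) (hJbd : J ⊆ stripBdry)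
    (a b c d : ℝ) (hI : leftEnd a b ⊆ I) (hJ : rightEnd c d ⊆ J) :
    Filter.Tendsto (fun ε : ℝ => modulus (stripFam ε I J))
      (nhdsWithin 0 (Set.Ioi 0)) (nhds ⊤) := by
  rw [ENNReal.tendsto_nhds_top_iff_nnreal]
  intro M
  set K := max (max |a| |c|) 1 with hKdef
  have hK1 : (1:ℝ) ≤ K := le_max_right _ _
  have hKpos : 0 < K := lt_of_lt_of_le one_pos hK1
  set δ := min (1 / (2 * K)) (Real.exp (-(Real.pi * ((M:ℝ) + 1))) / K) with hδdef
  have hδpos : 0 < δ := lt_min (by positivity) (by positivity)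
  filter_upwards [Ioo_mem_nhdsGT_of_mem (Set.left_mem_Ico.2 hδpos)] with ε hε
  obtain ⟨hε0, hεδ⟩ := hε
  have hεKpos : 0 < ε * K := by positivity
  have hεK1 : ε * K < 1 := by
    have h2 : δ ≤ 1 / (2 * K) := min_le_left _ _
    have h3 : ε * K < (1 / (2 * K)) * K := by nlinarith
    have h4 : (1 / (2 * K)) * K = 1 / 2 := by field_simp
    rw [h4] at h3
    linarith
  have hlog : Real.pi * ((M:ℝ) + 1) < Real.log (1 / (ε * K)) := by
    have hδ2 : δ ≤ Real.exp (-(Real.pi * ((M:ℝ) + 1))) / K := min_le_right _ _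
    have h2 : ε * K < Real.exp (-(Real.pi * ((M:ℝ) + 1))) := by
      have h3 : ε * K < (Real.exp (-(Real.pi * ((M:ℝ) + 1))) / K) * K := by nlinarith
      rwa [div_mul_cancel₀ _ hKpos.ne'] at h3
    have h4 := Real.log_lt_log hεKpos h2
    rw [Real.log_exp] at h4
    rw [Real.log_div one_ne_zero hεKpos.ne', Real.log_one]
    linarith
  have hπ := Real.pi_pos
  have hlogpos : 0 < Real.log (1 / (ε * K)) / Real.pi := by
    apply div_pos _ hπ
    nlinarith [M.coe_nonneg]
  have hMlt : (M : ENNReal) < ENNReal.ofReal (Real.log (1 / (ε * K)) / Real.pi) := by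
    rw [← ENNReal.ofReal_coe_nnreal]
    refine (ENNReal.ofReal_lt_ofReal_iff hlogpos).2 ?_
    rw [lt_div_iff₀ hπ]
    nlinarith [M.coe_nonneg]
  refine lt_of_lt_of_le hMlt ?_
  unfold modulus
  refine le_iInf fun ρ => le_iInf fun hadm => ?_
  obtain ⟨hmeas, hint⟩ := hadm
  refine key_bound hmeas hεKpos hεK1 fun r hr => ?_
  exact adm_bound hmeas (lt_trans hεKpos hr.1)
    (hint (semiPC r) (semiPC_mem I J a b c d hI hJ hε0 hr.1 hr.2))


end
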